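/- Let μ be a compactly supported Radon measure on ℝ², and let χ_ε(x) = ε^{-2} χ_Q(x/ε) where Q = (−1/2,1/2)² is the open unit square centered at the origin. Write μ_ε = χ_ε * μ (so μ_ε is a function on ℝ²), and suppose that for some t ∈ ℝ the sliced measure μ_t with respect to the vertical projection ρ₂(x₁,x₂) = x₂ exists, i.e. the limit Λ(η) = lim_{δ→0} (2δ)^{-1} ∫_{ρ₂^{-1}(t−δ,t+δ)} η dμ exists for every continuous η. Then for every η ∈ C(ℝ²), ∫ η dμ_t = lim_{ε→0} ∫_ℝ η(s,t) μ_ε(s,t) ds. -/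

import Mathlib

open Set MeasureTheory Filter

lemma aux_integrable {m : Measure (ℝ × ℝ)} [IsFiniteMeasure m] {K : Set (ℝ × ℝ)}
    (hK : IsCompact K) (h0 : m Kᶜ = 0) {h : ℝ × ℝ → ℝ} (hh : Continuous h) :
    Integrable h m := by
  obtain ⟨C, hC⟩ := hK.exists_bound_of_continuousOn hh.continuousOn
  refine Integrable.mono' (integrable_const (max C 0)) hh.aestronglyMeasurable ?_
  have hmem : ∀ᵐ x ∂m, x ∈ K := by
    rw [ae_iff]; simpa [compl_def] using h0
  filter_upwards [hmem] with x hx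
  exact le_trans (hC x hx) (le_max_left _ _)

lemma cont_primitive {f : ℝ → ℝ} (hf : Continuous f) {c : ℝ} (hc : 0 ≤ c) :
    Continuous fun y : ℝ => ∫ s in Ioo (y - c) (y + c), f s := by
  have hI : ∀ a b : ℝ, IntervalIntegrable f volume a b := fun a b => hf.intervalIntegrable a b
  have key : ∀ y : ℝ, ∫ s in Ioo (y - c) (y + c), f s
      = (∫ s in (0:ℝ)..(y + c), f s) - ∫ s in (0:ℝ)..(y - c), f s := by
    intro y
    have h2 : ∫ s in Ioo (y - c) (y + c), f s = ∫ s in (y-c)..(y+c), f s := by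
      rw [intervalIntegral.integral_of_le (by linarith), MeasureTheory.integral_Ioc_eq_integral_Ioo]
    rw [h2, ← intervalIntegral.integral_add_adjacent_intervals (hI 0 (y - c)) (hI (y-c) (y+c))]
    ring
  simp only [key]
  have h1 : Continuous fun u : ℝ => ∫ s in (0:ℝ)..u, f s :=
    intervalIntegral.continuous_primitive hI 0
  exact (h1.comp (continuous_id.add continuous_const)).sub
    (h1.comp (continuous_id.sub continuous_const))


lemma fubini1d (ρ : Measure ℝ) [IsFiniteMeasure ρ] {L : Set ℝ} (hL : IsCompact L)
    (h0 : ρ Lᶜ = 0) {f : ℝ → ℝ} (hf : Continuous f) {c : ℝ} (hc : 0 < c) :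
    ∫ s, f s * (ρ (Ioo (s - c) (s + c))).toReal
      = ∫ y, (∫ s in Ioo (y - c) (y + c), f s) ∂ρ := by
  set D : Set (ℝ × ℝ) := {q : ℝ × ℝ | dist q.1 q.2 < c} with hD
  have hDopen : IsOpen D := isOpen_lt (by fun_prop) continuous_const
  set F : ℝ × ℝ → ℝ := D.indicator (fun q => f q.1) with hF
  have hdist : ∀ s y : ℝ, dist s y < c ↔ (s ∈ Ioo (y - c) (y + c)) := by
    intro s y
    simp only [Real.dist_eq, abs_sub_lt_iff, mem_Ioo]
    constructor <;> (rintro ⟨h1, h2⟩; exact ⟨by linarith, by linarith⟩)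
  have hdist' : ∀ s y : ℝ, dist s y < c ↔ (y ∈ Ioo (s - c) (s + c)) := by
    intro s y; rw [dist_comm, hdist y s]
  have hFsm : StronglyMeasurable F :=
    (hf.comp continuous_fst).stronglyMeasurable.indicator hDopen.measurableSet
  -- integrability on the product
  have hFint : Integrable F ((volume : Measure ℝ).prod ρ) := by
    set T := Metric.cthickening c L with hT
    have hTc : IsCompact T := hL.cthickening
    obtain ⟨M, hM⟩ := hTc.exists_bound_of_continuousOn hf.continuousOn
    set M' := max M 0 with hM'
    have hTLmeas : MeasurableSet (T ×ˢ L) :=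
      (hTc.isClosed.measurableSet).prod (hL.isClosed.measurableSet)
    have hfin : (volume.prod ρ) (T ×ˢ L) < ⊤ := by
      rw [Measure.prod_prod]
      exact ENNReal.mul_lt_top hTc.measure_lt_top (measure_lt_top ρ L)
    have hgint : Integrable ((T ×ˢ L).indicator (fun _ => M')) (volume.prod ρ) := by
      rw [integrable_indicator_iff hTLmeas]
      exact integrableOn_const (C := M') hfin.ne
    refine hgint.mono' hFsm.aestronglyMeasurable ?_
    have hae : ∀ᵐ p ∂((volume : Measure ℝ).prod ρ), p.2 ∈ L := by
      rw [ae_iff]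
      have he : {p : ℝ × ℝ | ¬ p.2 ∈ L} = (univ : Set ℝ) ×ˢ Lᶜ := by ext p; simp
      rw [he, Measure.prod_prod, h0, mul_zero]
    filter_upwards [hae] with p hp
    by_cases hpD : p ∈ D
    · have hp1T : p.1 ∈ T := Metric.mem_cthickening_of_dist_le p.1 p.2 c L hp (le_of_lt hpD)
      rw [hF, indicator_of_mem hpD, indicator_of_mem (mem_prod.2 ⟨hp1T, hp⟩)]
      exact le_trans (hM p.1 hp1T) (le_max_left _ _)
    · rw [hF, indicator_of_notMem hpD, norm_zero]
      exact indicator_nonneg (fun _ _ => le_max_right _ _) _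
  have e1 : ∀ s : ℝ, (∫ y, F (s, y) ∂ρ) = f s * (ρ (Ioo (s - c) (s + c))).toReal := by
    intro s
    have hfe : (fun y => F (s, y)) = (Ioo (s - c) (s + c)).indicator (fun _ => f s) := by
      ext y
      by_cases h : y ∈ Ioo (s - c) (s + c)
      · rw [indicator_of_mem h, hF, indicator_of_mem (by simpa [hD, hdist'] using h)]
      · rw [indicator_of_notMem h, hF,
          indicator_of_notMem (by simpa [hD, hdist'] using h)]
    rw [hfe, integral_indicator_const _ measurableSet_Ioo, smul_eq_mul, mul_comm, measureReal_def]
  have e2 : ∀ y : ℝ, (∫ s, F (s, y)) = ∫ s in Ioo (y - c) (y + c), f s := by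
    intro y
    have hfe : (fun s => F (s, y)) = (Ioo (y - c) (y + c)).indicator f := by
      ext s
      by_cases h : s ∈ Ioo (y - c) (y + c)
      · rw [indicator_of_mem h, hF, indicator_of_mem (by simpa [hD, hdist] using h)]
      · rw [indicator_of_notMem h, hF,
          indicator_of_notMem (by simpa [hD, hdist] using h)]
    rw [hfe, integral_indicator measurableSet_Ioo]
  have swap := MeasureTheory.integral_integral_swap (f := fun s y => F (s, y)) hFint
  simp only [e1, e2] at swap
  exact swap


lemma squeeze0 {g M : ℝ → ℝ} {L : ℝ} (hM : Tendsto M (nhdsWithin 0 (Ioi 0)) (nhds L))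
    (h : ∀ θ : ℝ, 0 < θ → ∀ᶠ ε in nhdsWithin 0 (Ioi 0), |g ε| ≤ θ * M ε) :
    Tendsto g (nhdsWithin 0 (Ioi 0)) (nhds 0) := by
  rw [NormedAddCommGroup.tendsto_nhds_zero]
  intro θ hθ
  set C : ℝ := max L 0 + 1 with hCdef
  have h0 : (0:ℝ) ≤ max L 0 := le_max_right _ _
  have hC : 0 < C := by linarith
  have hLC : L < C := lt_of_le_of_lt (le_max_left L 0) (by linarith)
  filter_upwards [h (θ / (2 * C)) (by positivity), hM.eventually_lt_const hLC] with ε h1 h2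
  have key : |g ε| ≤ θ / (2 * C) * M ε := h1
  have : θ / (2 * C) * M ε ≤ θ / (2 * C) * C :=
    mul_le_mul_of_nonneg_left h2.le (by positivity)
  have hlt : θ / (2 * C) * C < θ := by
    rw [div_mul_eq_mul_div, mul_comm]
    rw [div_lt_iff₀ (by positivity)]
    nlinarith
  calc ‖g ε‖ = |g ε| := rfl
    _ < θ := lt_of_le_of_lt (key.trans this) hlt

lemma half_tendsto : Tendsto (fun ε : ℝ => ε / 2) (nhdsWithin 0 (Ioi 0)) (nhdsWithin 0 (Ioi 0)) := by
  apply tendsto_nhdsWithin_of_tendsto_nhds_of_eventually_within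
  · have : Tendsto (fun ε : ℝ => ε / 2) (nhds 0) (nhds 0) := by
      simpa using (continuous_id.div_const 2).tendsto (0:ℝ)
    exact this.mono_left nhdsWithin_le_nhds
  · filter_upwards [self_mem_nhdsWithin] with ε (hε : ε ∈ Ioi 0)
    exact half_pos (mem_Ioi.mp hε)

private theorem sliced_measure_mollifier_convergence_aux
    (μ : Measure (ℝ × ℝ)) [IsFiniteMeasure μ]
    (hcpt : ∃ K : Set (ℝ × ℝ), IsCompact K ∧ μ Kᶜ = 0)
    (t : ℝ) (ν : Measure (ℝ × ℝ)) [IsFiniteMeasure ν]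
    (hslice : ∀ η : ℝ × ℝ → ℝ, Continuous η →
      Tendsto (fun δ : ℝ =>
          (2 * δ)⁻¹ * ∫ x in {p : ℝ × ℝ | p.2 ∈ Ioo (t - δ) (t + δ)}, η x ∂μ)
        (nhdsWithin 0 (Ioi 0)) (nhds (∫ x, η x ∂ν))) (η : ℝ × ℝ → ℝ) (hη : Continuous η) :
      Tendsto (fun ε : ℝ =>
          ∫ s : ℝ, η (s, t) *
            (ε ^ (2 : ℕ))⁻¹ *
              (μ (Ioo (s - ε / 2) (s + ε / 2) ×ˢ Ioo (t - ε / 2) (t + ε / 2))).toReal)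
        (nhdsWithin 0 (Ioi 0)) (nhds (∫ x, η x ∂ν)) := by
  obtain ⟨K₀, hK₀c, hK₀0⟩ := hcpt
  set K : Set (ℝ × ℝ) := K₀ ∪ {((0:ℝ),(0:ℝ))} with hKdef
  have hKc : IsCompact K := hK₀c.union isCompact_singleton
  have hK0 : μ Kᶜ = 0 :=
    measure_mono_null (compl_subset_compl.2 subset_union_left) hK₀0
  have hKcl : IsClosed K := hKc.isClosed
  have hKne : K.Nonempty := ⟨((0:ℝ),(0:ℝ)), Or.inr rfl⟩
  set S : ℝ → Set (ℝ × ℝ) := fun δ => {p : ℝ × ℝ | p.2 ∈ Ioo (t - δ) (t + δ)} with hSdef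
  have hSmeas : ∀ δ, MeasurableSet (S δ) := fun δ => measurable_snd measurableSet_Ioo
  have hres0 : ∀ δ : ℝ, (μ.restrict (S δ)) Kᶜ = 0 := by
    intro δ
    rw [Measure.restrict_apply hKcl.measurableSet.compl]
    exact measure_mono_null inter_subset_left hK0
  have hae : ∀ δ : ℝ, ∀ᵐ x ∂(μ.restrict (S δ)), x ∈ K := by
    intro δ
    rw [ae_iff]; simpa [compl_def] using hres0 δ
  -- normalized strip mass
  have hM1 : Tendsto (fun δ : ℝ => (2*δ)⁻¹ * (μ (S δ)).toReal) (nhdsWithin 0 (Ioi 0))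
      (nhds ((ν univ).toReal)) := by
    have := hslice (fun _ => (1:ℝ)) continuous_const
    simpa [integral_const, Measure.restrict_apply_univ, measureReal_def, hSdef] using this
  -- ν is supported on K
  have hν0 : ν Kᶜ = 0 := by
    have key : ∀ r : ℝ, 0 < r → ν {x : ℝ × ℝ | 2*r ≤ Metric.infDist x K} = 0 := by
      intro r hr
      set φ : ℝ × ℝ → ℝ := fun x => min 1 (max 0 ((Metric.infDist x K - r)/r)) with hφdef
      have hφc : Continuous φ := continuous_const.min (continuous_const.max
        (((Metric.continuous_infDist_pt K).sub continuous_const).div_const r))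
      have hφ01 : ∀ x, 0 ≤ φ x ∧ φ x ≤ 1 := fun x =>
        ⟨le_min zero_le_one (le_max_left _ _), min_le_left _ _⟩
      have hφ0 : ∀ x ∈ K, φ x = 0 := by
        intro x hx
        have h1 : (0 - r)/r = -1 := by field_simp; ring
        simp only [hφdef, Metric.infDist_zero_of_mem hx]
        rw [zero_sub, neg_div, div_self hr.ne']
        norm_num
      have hzero : ∀ δ : ℝ, ∫ x in S δ, φ x ∂μ = 0 := by
        intro δ
        rw [integral_eq_zero_iff_of_nonneg (fun x => (hφ01 x).1)
          ((aux_integrable hKc (hres0 δ) hφc))]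
        · rw [Filter.EventuallyEq]
          filter_upwards [hae δ] with x hx using hφ0 x hx
      have hlim := hslice φ hφc
      simp +zetaDelta only [hzero, mul_zero] at hlim
      have hνφ : ∫ x, φ x ∂ν = 0 := tendsto_nhds_unique hlim tendsto_const_nhds
      set E : Set (ℝ × ℝ) := {x : ℝ × ℝ | 2*r ≤ Metric.infDist x K} with hEdef
      have hEm : MeasurableSet E :=
        measurableSet_le measurable_const (Metric.continuous_infDist_pt K).measurable
      have hφint : Integrable φ ν := by
        refine Integrable.mono' (integrable_const 1) hφc.aestronglyMeasurable
          (Eventually.of_forall fun x => ?_)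
        rw [Real.norm_eq_abs, abs_le]
        exact ⟨by linarith [(hφ01 x).1], (hφ01 x).2⟩
      have hind : ∀ x, E.indicator (fun _ => (1:ℝ)) x ≤ φ x := by
        intro x
        by_cases hx : x ∈ E
        · rw [indicator_of_mem hx]
          have hx' : 2*r ≤ Metric.infDist x K := hx
          have h2 : (1:ℝ) ≤ (Metric.infDist x K - r)/r := by
            rw [le_div_iff₀ hr]; linarith
          exact le_min le_rfl (le_trans h2 (le_max_right _ _))
        · rw [indicator_of_notMem hx]; exact (hφ01 x).1
      have hmono := integral_mono ((integrable_const (1:ℝ)).indicator hEm) hφint hind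
      rw [integral_indicator_const _ hEm, hνφ, smul_eq_mul, mul_one] at hmono
      have h0' : (ν E).toReal = 0 := le_antisymm hmono ENNReal.toReal_nonneg
      exact (ENNReal.toReal_eq_zero_iff _).1 h0' |>.resolve_right (measure_ne_top ν E)
    have hcover : Kᶜ ⊆ ⋃ n : ℕ, {x : ℝ × ℝ | 2*(1/(n+1)) ≤ Metric.infDist x K} := by
      intro x hx
      have hd : 0 < Metric.infDist x K := (hKcl.notMem_iff_infDist_pos hKne).1 hx
      obtain ⟨n, hn⟩ := exists_nat_gt (2 / Metric.infDist x K)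
      refine mem_iUnion.2 ⟨n, ?_⟩
      simp only [mem_setOf_eq]
      rw [div_lt_iff₀ hd] at hn
      have hn1 : (0:ℝ) < (n:ℝ)+1 := by positivity
      rw [mul_one_div, div_le_iff₀ hn1]
      nlinarith [Metric.infDist_nonneg (x := x) (s := K)]
    exact measure_mono_null hcover
      (measure_iUnion_null fun n => key (1/(n+1)) (by positivity))
  set f : ℝ → ℝ := fun s => η (s, t) with hfdef
  have hf : Continuous f := hη.comp (continuous_id.prodMk continuous_const)
  set tη : ℝ × ℝ → ℝ := fun x => η (x.1, t) with htηdef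
  have htη : Continuous tη := hη.comp (continuous_fst.prodMk continuous_const)
  have hνint : ∀ {h : ℝ × ℝ → ℝ}, Continuous h → Integrable h ν :=
    fun hh => aux_integrable hKc hν0 hh
  -- uniform continuity extractor on cthickening 1 K (plane version)
  obtain ⟨T₂, hT₂c, hT₂K, hT₂near⟩ :
      ∃ T₂ : Set (ℝ × ℝ), IsCompact T₂ ∧ K ⊆ T₂ ∧
        (∀ x : ℝ × ℝ, ∀ y : ℝ × ℝ, y ∈ K → dist x y ≤ 1 → x ∈ T₂) := by
    refine ⟨Metric.cthickening 1 K, hKc.cthickening, Metric.self_subset_cthickening K, ?_⟩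
    intro x y hy hd
    exact Metric.mem_cthickening_of_dist_le x y 1 K hy hd
  -- Part (c): ∫ η dν = ∫ tη dν
  have hEq : ∫ x, η x ∂ν = ∫ x, tη x ∂ν := by
    have hlim1 := hslice (fun x => η x - tη x) (hη.sub htη)
    have hlim2 : Tendsto (fun δ : ℝ => (2*δ)⁻¹ * ∫ x in S δ, (η x - tη x) ∂μ)
        (nhdsWithin 0 (Ioi 0)) (nhds 0) := by
      refine squeeze0 hM1 ?_
      intro θ hθ
      obtain ⟨δ₀, hδ₀pos, hδ₀⟩ :=
        Metric.uniformContinuousOn_iff.1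
          (hT₂c.uniformContinuousOn_of_continuous hη.continuousOn) θ hθ
      filter_upwards [Ioo_mem_nhdsGT (lt_min one_pos hδ₀pos)] with δ hδ
      obtain ⟨hδpos, hδlt⟩ := hδ
      have hδ1 : δ ≤ 1 := le_trans hδlt.le (min_le_left _ _)
      have hδδ₀ : δ ≤ δ₀ := le_trans hδlt.le (min_le_right _ _)
      have hnorm : ‖∫ x in S δ, (η x - tη x) ∂μ‖ ≤ θ * (μ (S δ)).toReal := by
        refine norm_setIntegral_le_of_norm_le_const_ae (measure_lt_top μ _) ?_
        filter_upwards [hae δ, ae_restrict_mem (hSmeas δ)] with x hxK hxS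
        have hxt : dist x (x.1, t) < δ := by
          rw [Prod.dist_eq]
          simp only [dist_self]
          have hxS' : x.2 ∈ Ioo (t - δ) (t + δ) := hxS
          rw [max_eq_right dist_nonneg, Real.dist_eq, abs_lt]
          obtain ⟨h1, h2⟩ := hxS'
          constructor <;> linarith
        have hxT : x ∈ T₂ := hT₂K hxK
        have hxtT : (x.1, t) ∈ T₂ := hT₂near _ x hxK (by rw [dist_comm]; linarith)
        have := hδ₀ x hxT (x.1, t) hxtT (lt_of_lt_of_le hxt hδδ₀)
        rw [Real.dist_eq] at this
        exact le_of_lt this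
      rw [abs_mul, abs_of_nonneg (inv_nonneg.2 (by linarith : (0:ℝ) ≤ 2*δ))]
      calc (2*δ)⁻¹ * |∫ x in S δ, (η x - tη x) ∂μ|
          ≤ (2*δ)⁻¹ * (θ * (μ (S δ)).toReal) :=
            mul_le_mul_of_nonneg_left hnorm (inv_nonneg.2 (by linarith))
        _ = θ * ((2*δ)⁻¹ * (μ (S δ)).toReal) := by ring
    have h0 : ∫ x, (η x - tη x) ∂ν = 0 := tendsto_nhds_unique hlim1 hlim2
    rw [integral_sub (hνint hη) (hνint htη)] at h0
    linarith
  -- Part (d),(e): mollified integral via Fubini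
  set g : ℝ → ℝ → ℝ := fun ε y => ∫ s in Ioo (y - ε/2) (y + ε/2), f s with hgdef
  set A' : ℝ → ℝ := fun ε => (ε^(2:ℕ))⁻¹ * ∫ x in S (ε/2), g ε x.1 ∂μ with hA'def
  set B : ℝ → ℝ := fun ε => (2*(ε/2))⁻¹ * ∫ x in S (ε/2), tη x ∂μ with hBdef
  have hB : Tendsto B (nhdsWithin 0 (Ioi 0)) (nhds (∫ x, tη x ∂ν)) :=
    (hslice tη htη).comp half_tendsto
  have hMhalf : Tendsto (fun ε : ℝ => (2*(ε/2))⁻¹ * (μ (S (ε/2))).toReal)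
      (nhdsWithin 0 (Ioi 0)) (nhds ((ν univ).toReal)) := hM1.comp half_tendsto
  have hgint : ∀ ε : ℝ, 0 < ε → Integrable (fun x : ℝ × ℝ => g ε x.1) (μ.restrict (S (ε/2))) :=
    fun ε hε => aux_integrable hKc (hres0 _)
      ((cont_primitive hf (by linarith : (0:ℝ) ≤ ε/2)).comp continuous_fst)
  have htηint : ∀ δ : ℝ, Integrable tη (μ.restrict (S δ)) :=
    fun δ => aux_integrable hKc (hres0 δ) htη
  have hψ : ∀ ε : ℝ, 0 < ε →
      A' ε - B ε = (ε^(2:ℕ))⁻¹ * ∫ x in S (ε/2), (g ε x.1 - ε * tη x) ∂μ := by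
    intro ε hε
    rw [integral_sub (hgint ε hε) ((htηint _).const_mul ε)]
    have h3 : ∫ x in S (ε/2), ε * tη x ∂μ = ε * ∫ x in S (ε/2), tη x ∂μ := by
      simpa [smul_eq_mul] using
        (integral_smul (ε) tη : ∫ x in S (ε/2), ε • tη x ∂μ = ε • ∫ x in S (ε/2), tη x ∂μ)
    rw [h3, hA'def, hBdef]
    field_simp
  have hL1c : IsCompact (Prod.fst '' K : Set ℝ) := hKc.image continuous_fst
  have hD : Tendsto (fun ε => A' ε - B ε) (nhdsWithin 0 (Ioi 0)) (nhds 0) := by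
    refine squeeze0 hMhalf ?_
    intro θ hθ
    obtain ⟨T₁, hT₁c, hT₁K, hT₁near⟩ :
        ∃ T₁ : Set ℝ, IsCompact T₁ ∧ (Prod.fst '' K : Set ℝ) ⊆ T₁ ∧
          (∀ x : ℝ, ∀ y : ℝ, y ∈ (Prod.fst '' K : Set ℝ) → dist x y ≤ 1 → x ∈ T₁) := by
      refine ⟨Metric.cthickening 1 _, hL1c.cthickening, Metric.self_subset_cthickening _, ?_⟩
      exact fun x y hy hd => Metric.mem_cthickening_of_dist_le x y 1 _ hy hd
    obtain ⟨δ₀, hδ₀pos, hδ₀⟩ :=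
      Metric.uniformContinuousOn_iff.1
        (hT₁c.uniformContinuousOn_of_continuous hf.continuousOn) θ hθ
    filter_upwards [Ioo_mem_nhdsGT (lt_min one_pos hδ₀pos)] with ε hεmem
    obtain ⟨hεpos, hεlt⟩ := hεmem
    have hε1 : ε ≤ 1 := le_trans hεlt.le (min_le_left _ _)
    have hεδ₀ : ε ≤ δ₀ := le_trans hεlt.le (min_le_right _ _)
    rw [hψ ε hεpos, abs_mul, abs_of_nonneg (inv_nonneg.2 (pow_nonneg hεpos.le 2))]
    have hnorm : ‖∫ x in S (ε/2), (g ε x.1 - ε * tη x) ∂μ‖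
        ≤ (θ * ε) * (μ (S (ε/2))).toReal := by
      refine norm_setIntegral_le_of_norm_le_const_ae (measure_lt_top μ _) ?_
      filter_upwards [hae (ε/2)] with x hxK
      have hx1L : x.1 ∈ (Prod.fst '' K : Set ℝ) := ⟨x, hxK, rfl⟩
      have hx1T : x.1 ∈ T₁ := hT₁K hx1L
      have hint1 : IntegrableOn f (Ioo (x.1 - ε/2) (x.1 + ε/2)) volume :=
        (hf.integrableOn_Icc).mono_set Ioo_subset_Icc_self
      have hvol : (volume (Ioo (x.1 - ε/2) (x.1 + ε/2))).toReal = ε := by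
        rw [Real.volume_Ioo, ENNReal.toReal_ofReal (by linarith)]; ring
      have hconst : ∫ _ in Ioo (x.1 - ε/2) (x.1 + ε/2), f x.1 ∂volume = ε * f x.1 := by
        rw [setIntegral_const, smul_eq_mul, measureReal_def, hvol]
      have hrw : g ε x.1 - ε * tη x
          = ∫ s in Ioo (x.1 - ε/2) (x.1 + ε/2), (f s - f x.1) := by
        rw [integral_sub hint1 (integrableOn_const
          (by rw [Real.volume_Ioo]; exact ENNReal.ofReal_ne_top))]
        rw [hconst]
      rw [hrw]
      have hC : ∀ s ∈ Ioo (x.1 - ε/2) (x.1 + ε/2), ‖f s - f x.1‖ ≤ θ := by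
        intro s hs
        obtain ⟨hs1, hs2⟩ := hs
        have hsT : s ∈ T₁ := hT₁near s x.1 hx1L
          (by rw [Real.dist_eq, abs_le]; constructor <;> linarith)
        have := hδ₀ s hsT x.1 hx1T
          (by rw [Real.dist_eq, abs_lt]; constructor <;> linarith)
        rw [Real.dist_eq] at this
        exact this.le
      calc ‖∫ s in Ioo (x.1 - ε/2) (x.1 + ε/2), (f s - f x.1)‖
          ≤ θ * (volume (Ioo (x.1 - ε/2) (x.1 + ε/2))).toReal :=
            norm_setIntegral_le_of_norm_le_const
              (by rw [Real.volume_Ioo]; exact ENNReal.ofReal_lt_top) hC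
        _ = θ * ε := by rw [hvol]
    calc (ε^(2:ℕ))⁻¹ * ‖∫ x in S (ε/2), (g ε x.1 - ε * tη x) ∂μ‖
        ≤ (ε^(2:ℕ))⁻¹ * ((θ * ε) * (μ (S (ε/2))).toReal) :=
          mul_le_mul_of_nonneg_left hnorm (inv_nonneg.2 (pow_nonneg hεpos.le 2))
      _ = θ * ((2*(ε/2))⁻¹ * (μ (S (ε/2))).toReal) := by
          field_simp
  have hA' : Tendsto A' (nhdsWithin 0 (Ioi 0)) (nhds (∫ x, η x ∂ν)) := by
    have hsum := hB.add hD
    rw [add_zero] at hsum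
    rw [hEq]
    exact hsum.congr (fun ε => by ring)
  -- Part (f): identify A' with the mollified integral for ε > 0
  refine Tendsto.congr' ?_ hA'
  filter_upwards [self_mem_nhdsWithin] with ε hεmem
  have hεpos : (0:ℝ) < ε := hεmem
  set ρ : Measure ℝ := Measure.map Prod.fst (μ.restrict (S (ε/2))) with hρdef
  haveI : IsFiniteMeasure ρ := Measure.isFiniteMeasure_map _ _
  have hρIoo : ∀ s : ℝ,
      μ (Ioo (s - ε/2) (s + ε/2) ×ˢ Ioo (t - ε/2) (t + ε/2)) = ρ (Ioo (s - ε/2) (s + ε/2)) := by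
    intro s
    rw [hρdef, Measure.map_apply measurable_fst measurableSet_Ioo,
      Measure.restrict_apply (measurable_fst measurableSet_Ioo)]
    congr 1
  have hρL : ρ ((Prod.fst '' K : Set ℝ)ᶜ) = 0 := by
    rw [hρdef, Measure.map_apply measurable_fst hL1c.isClosed.measurableSet.compl,
      Measure.restrict_apply (measurable_fst hL1c.isClosed.measurableSet.compl)]
    refine measure_mono_null ?_ hK0
    rintro p ⟨hp1, -⟩ hpK
    exact hp1 ⟨p, hpK, rfl⟩
  calc A' ε = (ε^(2:ℕ))⁻¹ * ∫ x in S (ε/2), g ε x.1 ∂μ := rfl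
    _ = (ε^(2:ℕ))⁻¹ * ∫ y, g ε y ∂ρ := by
        rw [hρdef, integral_map measurable_fst.aemeasurable
          ((cont_primitive hf (by linarith : (0:ℝ) ≤ ε/2)).aestronglyMeasurable)]
    _ = (ε^(2:ℕ))⁻¹ * ∫ s, f s * (ρ (Ioo (s - ε/2) (s + ε/2))).toReal := by
        rw [fubini1d ρ hL1c hρL hf (half_pos hεpos)]
    _ = ∫ s, (ε^(2:ℕ))⁻¹ * (f s * (ρ (Ioo (s - ε/2) (s + ε/2))).toReal) := by
        rw [← smul_eq_mul, ← integral_smul]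
        simp [smul_eq_mul]
    _ = ∫ s : ℝ, η (s, t) * (ε ^ (2 : ℕ))⁻¹ *
          (μ (Ioo (s - ε / 2) (s + ε / 2) ×ˢ Ioo (t - ε / 2) (t + ε / 2))).toReal := by
        refine integral_congr_ae (Eventually.of_forall fun s => ?_)
        simp only [hρIoo s, hfdef]
        ring

/-- If `μ` is a compactly supported finite (Radon) measure on `ℝ²`, `μ_ε = χ_ε * μ` its
mollification by normalized indicators of squares, and the sliced measure `μ_t` (w.r.t. the
vertical projection `ρ₂(x₁,x₂) = x₂`) exists at `t`, then for every continuous `η`,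
`∫ η dμ_t = lim_{ε→0} ∫ η(s,t) μ_ε(s,t) ds`. -/
theorem sliced_measure_mollifier_convergence
    (μ : Measure (ℝ × ℝ)) [IsFiniteMeasure μ]
    (hcpt : ∃ K : Set (ℝ × ℝ), IsCompact K ∧ μ Kᶜ = 0)
    (t : ℝ) (ν : Measure (ℝ × ℝ)) [IsFiniteMeasure ν]
    -- `ν = μ_t` is the sliced measure at `t`:
    (hslice : ∀ η : ℝ × ℝ → ℝ, Continuous η →
      Tendsto (fun δ : ℝ =>
          (2 * δ)⁻¹ * ∫ x in {p : ℝ × ℝ | p.2 ∈ Ioo (t - δ) (t + δ)}, η x ∂μ)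
        (nhdsWithin 0 (Ioi 0)) (nhds (∫ x, η x ∂ν))) :
    ∀ η : ℝ × ℝ → ℝ, Continuous η →
      Tendsto (fun ε : ℝ =>
          ∫ s : ℝ, η (s, t) *
            (ε ^ (2 : ℕ))⁻¹ *
              (μ (Ioo (s - ε / 2) (s + ε / 2) ×ˢ Ioo (t - ε / 2) (t + ε / 2))).toReal)
        (nhdsWithin 0 (Ioi 0)) (nhds (∫ x, η x ∂ν)) := fun η hη =>
  sliced_measure_mollifier_convergence_aux μ hcpt t ν hslice η hη
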